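/- A continuous function f on an interval I is convex if and only if (1/(2ε)) ∫_a^{a+ε} f(x) dx + (1/(2ε)) ∫_{b-ε}^b f(x) dx ≥ (1/(b-a)) ∫_a^b f(x) dx for all a < b in I and all ε ∈ (0,(b-a)/2). -/

import Mathlib

open MeasureTheory intervalIntegral Set


lemma my_intg {I : Set ℝ} (hI : I.OrdConnected) {f : ℝ → ℝ}
    (hf : ContinuousOn f I) {u v : ℝ} (hu : u ∈ I) (hv : v ∈ I) :
    IntervalIntegrable f volume u v :=
  (hf.mono (hI.uIcc_subset hu hv)).intervalIntegrable

-- step lemma: shrunk-average is ≤ full average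
lemma my_step {I : Set ℝ} (hI : I.OrdConnected) {f : ℝ → ℝ}
    (hf : ContinuousOn f I)
    (H : ∀ a b : ℝ, a ∈ I → b ∈ I → a < b → ∀ ε : ℝ, 0 < ε → ε < (b - a) / 2 →
        (1 / (b - a)) * ∫ x in a..b, f x ≤
          (1 / (2 * ε)) * (∫ x in a..(a + ε), f x) +
            (1 / (2 * ε)) * ∫ x in (b - ε)..b, f x)
    {a b s : ℝ} (ha : a ∈ I) (hb : b ∈ I) (hab : a < b)
    (hs : 0 < s) (hs2 : s < (b - a) / 2) :
    (1 / (b - a - 2*s)) * ∫ x in (a+s)..(b-s), f x ≤ (1 / (b - a)) * ∫ x in a..b, f x := by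
  have hIcc : Icc a b ⊆ I := hI.out ha hb
  have has : a + s ∈ I := hIcc ⟨by linarith, by linarith⟩
  have hbs : b - s ∈ I := hIcc ⟨by linarith, by linarith⟩
  have h1 := H a b ha hb hab s hs hs2
  have e1 : (∫ x in a..(a+s), f x) + (∫ x in (a+s)..(b-s), f x) = ∫ x in a..(b-s), f x :=
    integral_add_adjacent_intervals (my_intg hI hf ha has) (my_intg hI hf has hbs)
  have e2 : (∫ x in a..(b-s), f x) + (∫ x in (b-s)..b, f x) = ∫ x in a..b, f x :=
    integral_add_adjacent_intervals (my_intg hI hf ha hbs) (my_intg hI hf hbs hb)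
  set W := ∫ x in a..b, f x
  set Ws := ∫ x in (a+s)..(b-s), f x
  have e3 : (∫ x in a..(a+s), f x) + (∫ x in (b-s)..b, f x) = W - Ws := by
    rw [← e2, ← e1]; ring
  -- from h1 : W/(b-a) ≤ (1/(2s)) * (W - Ws)
  have h2 : (1 / (b - a)) * W ≤ (1 / (2*s)) * (W - Ws) := by
    rw [← e3]; linarith [h1]
  rw [div_mul_eq_mul_div, div_mul_eq_mul_div, div_le_div_iff₀ (by linarith) (by linarith)] at h2
  rw [div_mul_eq_mul_div, div_mul_eq_mul_div, div_le_div_iff₀ (by linarith) (by linarith)]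
  nlinarith [h2]

-- L2 : average ≤ mean of endpoints
lemma my_L2 {I : Set ℝ} (hI : I.OrdConnected) {f : ℝ → ℝ}
    (hf : ContinuousOn f I)
    (H : ∀ a b : ℝ, a ∈ I → b ∈ I → a < b → ∀ ε : ℝ, 0 < ε → ε < (b - a) / 2 →
        (1 / (b - a)) * ∫ x in a..b, f x ≤
          (1 / (2 * ε)) * (∫ x in a..(a + ε), f x) +
            (1 / (2 * ε)) * ∫ x in (b - ε)..b, f x)
    {a b : ℝ} (ha : a ∈ I) (hb : b ∈ I) (hab : a < b) :
    (1 / (b - a)) * ∫ x in a..b, f x ≤ (f a + f b) / 2 := by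
  have hIcc : Icc a b ⊆ I := hI.out ha hb
  by_contra hcon
  push_neg at hcon
  set V := (1 / (b - a)) * ∫ x in a..b, f x with hV
  set η := (V - (f a + f b)/2) / 2 with hη
  have hηpos : 0 < η := by rw [hη]; linarith
  obtain ⟨δ₁, hδ₁pos, hδ₁⟩ := Metric.continuousWithinAt_iff.mp (hf a ha) η hηpos
  obtain ⟨δ₂, hδ₂pos, hδ₂⟩ := Metric.continuousWithinAt_iff.mp (hf b hb) η hηpos
  set ε := min (min δ₁ δ₂) ((b - a)/2) / 2 with hε
  have hεpos : 0 < ε := by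
    apply div_pos _ two_pos
    exact lt_min (lt_min hδ₁pos hδ₂pos) (by linarith)
  have hm1 := min_le_left (min δ₁ δ₂) ((b-a)/2)
  have hm2 := min_le_right (min δ₁ δ₂) ((b-a)/2)
  have hm3 := min_le_left δ₁ δ₂
  have hm4 := min_le_right δ₁ δ₂
  have hεδ₁ : ε < δ₁ := by rw [hε] at hεpos ⊢; linarith
  have hεδ₂ : ε < δ₂ := by rw [hε] at hεpos ⊢; linarith
  have hεab : ε < (b - a)/2 := by rw [hε] at hεpos ⊢; linarith
  have haε : a + ε ∈ I := hIcc ⟨by linarith, by linarith⟩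
  have hbε : b - ε ∈ I := hIcc ⟨by linarith, by linarith⟩
  -- bound the first edge integral
  have b1 : (∫ x in a..(a+ε), f x) ≤ ε * (f a + η) := by
    have : (∫ x in a..(a+ε), f x) ≤ ∫ _x in a..(a+ε), (f a + η) := by
      apply integral_mono_on (by linarith) (my_intg hI hf ha haε)
        intervalIntegrable_const
      intro x hx
      have hxI : x ∈ I := hIcc ⟨hx.1, by linarith [hx.2]⟩
      have hd : dist x a < δ₁ := by
        rw [Real.dist_eq, abs_lt]; constructor <;> [linarith [hx.1]; linarith [hx.2]]
      have := hδ₁ hxI hd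
      rw [Real.dist_eq, abs_lt] at this
      linarith [this.1]
    rw [intervalIntegral.integral_const, smul_eq_mul] at this
    calc (∫ x in a..(a+ε), f x) ≤ (a + ε - a) * (f a + η) := this
      _ = ε * (f a + η) := by ring
  have b2 : (∫ x in (b-ε)..b, f x) ≤ ε * (f b + η) := by
    have : (∫ x in (b-ε)..b, f x) ≤ ∫ _x in (b-ε)..b, (f b + η) := by
      apply integral_mono_on (by linarith) (my_intg hI hf hbε hb)
        intervalIntegrable_const
      intro x hx
      have hxI : x ∈ I := hIcc ⟨by linarith [hx.1], hx.2⟩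
      have hd : dist x b < δ₂ := by
        rw [Real.dist_eq, abs_lt]; constructor <;> [linarith [hx.1]; linarith [hx.2]]
      have := hδ₂ hxI hd
      rw [Real.dist_eq, abs_lt] at this
      linarith [this.1]
    rw [intervalIntegral.integral_const, smul_eq_mul] at this
    calc (∫ x in (b-ε)..b, f x) ≤ (b - (b - ε)) * (f b + η) := this
      _ = ε * (f b + η) := by ring
  have h1 := H a b ha hb hab ε hεpos hεab
  have h2ε : (0:ℝ) < 2 * ε := by linarith
  have key : (1 / (2*ε)) * (∫ x in a..(a+ε), f x) + (1 / (2*ε)) * (∫ x in (b-ε)..b, f x)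
      ≤ (f a + f b)/2 + η := by
    have r1 : (1 / (2*ε)) * (∫ x in a..(a+ε), f x) ≤ (1 / (2*ε)) * (ε * (f a + η)) :=
      mul_le_mul_of_nonneg_left b1 (by positivity)
    have r2 : (1 / (2*ε)) * (∫ x in (b-ε)..b, f x) ≤ (1 / (2*ε)) * (ε * (f b + η)) :=
      mul_le_mul_of_nonneg_left b2 (by positivity)
    have e : (1 / (2*ε)) * (ε * (f a + η)) + (1 / (2*ε)) * (ε * (f b + η))
        = (f a + f b)/2 + η := by
      field_simp
      ring
    linarith
  have : V ≤ (f a + f b)/2 + η := le_trans h1 key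
  rw [hη] at this
  linarith

lemma my_L1 {I : Set ℝ} (hI : I.OrdConnected) {f : ℝ → ℝ}
    (hf : ContinuousOn f I)
    (H : ∀ a b : ℝ, a ∈ I → b ∈ I → a < b → ∀ ε : ℝ, 0 < ε → ε < (b - a) / 2 →
        (1 / (b - a)) * ∫ x in a..b, f x ≤
          (1 / (2 * ε)) * (∫ x in a..(a + ε), f x) +
            (1 / (2 * ε)) * ∫ x in (b - ε)..b, f x)
    {a b : ℝ} (ha : a ∈ I) (hb : b ∈ I) (hab : a < b) :
    f ((a + b) / 2) ≤ (1 / (b - a)) * ∫ x in a..b, f x := by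
  have hIcc : Icc a b ⊆ I := hI.out ha hb
  set m := (a + b) / 2 with hm
  have hmI : m ∈ I := hIcc ⟨by rw [hm]; linarith, by rw [hm]; linarith⟩
  by_contra hcon
  push_neg at hcon
  set V := (1 / (b - a)) * ∫ x in a..b, f x with hV
  set η := (f m - V) / 2 with hη
  have hηpos : 0 < η := by rw [hη]; linarith
  obtain ⟨δ, hδpos, hδ⟩ := Metric.continuousWithinAt_iff.mp (hf m hmI) η hηpos
  set ρ := min δ ((b - a) / 2) / 2 with hρ
  have hm1 := min_le_left δ ((b-a)/2)
  have hm2 := min_le_right δ ((b-a)/2)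
  have hρpos : 0 < ρ := by
    rw [hρ]; exact div_pos (lt_min hδpos (by linarith)) two_pos
  have hρδ : ρ < δ := by rw [hρ] at hρpos ⊢; linarith
  have hρab : ρ < (b - a) / 2 := by rw [hρ] at hρpos ⊢; linarith
  set s := (b - a) / 2 - ρ with hs
  have hspos : 0 < s := by rw [hs]; linarith
  have hs2 : s < (b - a) / 2 := by rw [hs]; linarith
  have step := my_step hI hf H ha hb hab hspos hs2
  have hasI : a + s ∈ I := hIcc ⟨by linarith, by rw [hs]; linarith⟩
  have hbsI : b - s ∈ I := hIcc ⟨by rw [hs]; linarith, by linarith⟩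
  have lower : (b - s - (a + s)) * (f m - η) ≤ ∫ x in (a+s)..(b-s), f x := by
    have hmono : (∫ _x in (a+s)..(b-s), (f m - η)) ≤ ∫ x in (a+s)..(b-s), f x := by
      apply integral_mono_on (by rw [hs]; linarith) intervalIntegrable_const
        (my_intg hI hf hasI hbsI)
      intro x hx
      have hxI : x ∈ I := hIcc ⟨by linarith [hx.1], by linarith [hx.2]⟩
      have hd : dist x m < δ := by
        rw [Real.dist_eq, abs_lt]
        constructor
        · have := hx.1; rw [hs] at this; rw [hm]; linarith
        · have := hx.2; rw [hs] at this; rw [hm]; linarith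
      have := hδ hxI hd
      rw [Real.dist_eq, abs_lt] at this
      linarith [this.1]
    rw [intervalIntegral.integral_const, smul_eq_mul] at hmono
    exact hmono
  have hlen : b - a - 2*s = 2*ρ := by rw [hs]; ring
  have hlen2 : b - s - (a + s) = 2*ρ := by rw [hs]; ring
  rw [hlen2] at lower
  have h2ρ : (0:ℝ) < 2*ρ := by linarith
  have key : f m - η ≤ (1 / (b - a - 2*s)) * ∫ x in (a+s)..(b-s), f x := by
    rw [hlen]
    have hmul := mul_le_mul_of_nonneg_left lower
      (le_of_lt (show (0:ℝ) < 1/(2*ρ) by positivity))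
    calc f m - η = (1/(2*ρ)) * (2*ρ*(f m - η)) := by field_simp
      _ ≤ (1/(2*ρ)) * ∫ x in (a+s)..(b-s), f x := hmul
  have : f m - η ≤ V := key.trans step
  rw [hη] at this
  linarith

lemma my_conv {I : Set ℝ} (hI : I.OrdConnected) {f : ℝ → ℝ}
    (hf : ContinuousOn f I)
    (H : ∀ a b : ℝ, a ∈ I → b ∈ I → a < b → ∀ ε : ℝ, 0 < ε → ε < (b - a) / 2 →
        (1 / (b - a)) * ∫ x in a..b, f x ≤
          (1 / (2 * ε)) * (∫ x in a..(a + ε), f x) +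
            (1 / (2 * ε)) * ∫ x in (b - ε)..b, f x) :
    ConvexOn ℝ I f := by
  -- midpoint inequality
  have M0 : ∀ u v : ℝ, u ∈ I → v ∈ I → u < v → f ((u + v)/2) ≤ (f u + f v)/2 := by
    intro u v hu hv huv
    exact (my_L1 hI hf H hu hv huv).trans (my_L2 hI hf H hu hv huv)
  -- chord inequality
  have chord : ∀ a b : ℝ, a ∈ I → b ∈ I → a < b → ∀ z ∈ Icc a b,
      f z ≤ f a + (f b - f a)/(b - a) * (z - a) := by
    intro a b ha hb hab
    have hIcc : Icc a b ⊆ I := hI.out ha hb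
    set h : ℝ → ℝ := fun z => f z - (f a + (f b - f a)/(b - a) * (z - a)) with hh
    have M1 : ∀ u v : ℝ, u ∈ Icc a b → v ∈ Icc a b → u < v →
        h ((u + v)/2) ≤ (h u + h v)/2 := by
      intro u v hu hv huv
      have hf0 := M0 u v (hIcc hu) (hIcc hv) huv
      have haff : f a + (f b - f a)/(b-a)*((u+v)/2 - a)
          = ((f a + (f b - f a)/(b-a)*(u - a)) + (f a + (f b - f a)/(b-a)*(v - a)))/2 := by
        ring
      simp only [hh]
      linarith
    have hcont : ContinuousOn h (Icc a b) := by
      apply ContinuousOn.sub (hf.mono hIcc)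
      exact (Continuous.continuousOn (by continuity))
    obtain ⟨c, hcmem, hcmax⟩ :=
      isCompact_Icc.exists_isMaxOn (nonempty_Icc.mpr hab.le) hcont
    have ha0 : h a = 0 := by simp only [hh]; ring
    have hb0 : h b = 0 := by
      have hba : b - a ≠ 0 := sub_ne_zero.mpr hab.ne'
      simp only [hh]; field_simp; ring
    intro z hz
    have hz0 : h z ≤ 0 := by
      refine le_trans (hcmax hz) ?_
      by_contra hpos
      push_neg at hpos
      have hac : a < c := by
        rcases hcmem.1.eq_or_lt with rfl | h'
        · rw [ha0] at hpos; exact absurd hpos (lt_irrefl 0)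
        · exact h'
      have hcb : c < b := by
        rcases hcmem.2.eq_or_lt with rfl | h'
        · rw [hb0] at hpos; exact absurd hpos (lt_irrefl 0)
        · exact h'
      rcases le_or_gt c ((a + b)/2) with hcase | hcase
      · have hvmem : 2*c - a ∈ Icc a b := ⟨by linarith, by linarith⟩
        have hstep := M1 a (2*c - a) (left_mem_Icc.mpr hab.le) hvmem (by linarith)
        have hmid : (a + (2*c - a))/2 = c := by ring
        rw [hmid, ha0] at hstep
        have h2 : h (2*c - a) ≤ h c := hcmax hvmem
        revert hstep h2 hpos
        generalize h c = Hc
        generalize h (2*c - a) = Hv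
        intro hstep h2 hpos
        linarith
      · have humem : 2*c - b ∈ Icc a b := ⟨by linarith, by linarith⟩
        have hstep := M1 (2*c - b) b humem (right_mem_Icc.mpr hab.le) (by linarith)
        have hmid : ((2*c - b) + b)/2 = c := by ring
        rw [hmid, hb0] at hstep
        have h2 : h (2*c - b) ≤ h c := hcmax humem
        revert hstep h2 hpos
        generalize h c = Hc
        generalize h (2*c - b) = Hu
        intro hstep h2 hpos
        linarith
    simp only [hh] at hz0
    linarith
  apply LinearOrder.convexOn_of_lt (convex_iff_ordConnected.mpr hI)
  intro x hx y hy hxy p q hp hq hpq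
  simp only [smul_eq_mul]
  have hc : p*x + q*y ∈ Icc x y := by
    constructor
    · have e : p*x + q*y - x = q*(y - x) := by linear_combination x * hpq
      have h0 : 0 ≤ q*(y - x) := mul_nonneg hq.le (by linarith)
      linarith
    · have e : y - (p*x + q*y) = p*(y - x) := by linear_combination (-y) * hpq
      have h0 : 0 ≤ p*(y - x) := mul_nonneg hp.le (by linarith)
      linarith
  have := chord x y hx hy hxy (p*x + q*y) hc
  have he : f x + (f y - f x)/(y - x) * ((p*x + q*y) - x) = p * f x + q * f y := by
    have hyx : y - x ≠ 0 := sub_ne_zero.mpr hxy.ne'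
    have harg : (p*x + q*y) - x = q * (y - x) := by linear_combination x * hpq
    rw [harg]
    have hcancel : (f y - f x)/(y - x) * (q * (y - x)) = q * (f y - f x) := by
      field_simp
    rw [hcancel]
    linear_combination (-(f x)) * hpq
  linarith [this, he.ge]

lemma my_fwd {I : Set ℝ} (hI : I.OrdConnected) {f : ℝ → ℝ}
    (hf : ContinuousOn f I) (hc : ConvexOn ℝ I f)
    {a b ε : ℝ} (ha : a ∈ I) (hb : b ∈ I) (hab : a < b)
    (hε : 0 < ε) (hε2 : ε < (b - a) / 2) :
    (1 / (b - a)) * ∫ x in a..b, f x ≤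
      (1 / (2 * ε)) * (∫ x in a..(a + ε), f x) +
        (1 / (2 * ε)) * ∫ x in (b - ε)..b, f x := by
  have hIcc : Icc a b ⊆ I := hI.out ha hb
  set m := (a + b) / 2 with hm
  have hmab : m ∈ Icc a b := ⟨by rw [hm]; linarith, by rw [hm]; linarith⟩
  have haεm : a + ε ≤ m := by rw [hm]; linarith
  set G : ℝ → ℝ := fun x => f x + f (a + b - x) with hG
  -- continuity of G on Icc a b
  have hmaps : ∀ x ∈ Icc a b, a + b - x ∈ Icc a b := by
    intro x hx; exact ⟨by linarith [hx.2], by linarith [hx.1]⟩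
  have hf2cont : ContinuousOn (fun x => f (a + b - x)) (Icc a b) := by
    apply (hf.mono hIcc).comp ((continuous_const.sub continuous_id).continuousOn)
    intro x hx; exact hmaps x hx
  have hGcont : ContinuousOn G (Icc a b) := (hf.mono hIcc).add hf2cont
  have hGint : ∀ u v : ℝ, u ∈ Icc a b → v ∈ Icc a b → IntervalIntegrable G volume u v := by
    intro u v hu hv
    exact (hGcont.mono (ordConnected_Icc.uIcc_subset hu hv)).intervalIntegrable
  have hfint : ∀ u v : ℝ, u ∈ Icc a b → v ∈ Icc a b → IntervalIntegrable f volume u v := by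
    intro u v hu hv
    exact ((hf.mono hIcc).mono (ordConnected_Icc.uIcc_subset hu hv)).intervalIntegrable
  have hf2int : ∀ u v : ℝ, u ∈ Icc a b → v ∈ Icc a b →
      IntervalIntegrable (fun x => f (a + b - x)) volume u v := by
    intro u v hu hv
    exact (hf2cont.mono (ordConnected_Icc.uIcc_subset hu hv)).intervalIntegrable
  -- antitone on [a, m]
  have key : ∀ x ∈ Icc a m, ∀ y ∈ Icc a m, x ≤ y → G y ≤ G x := by
    intro x hx y hy hxy
    rcases eq_or_lt_of_le hxy with rfl | hlt
    · exact le_refl _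
    have hxm : x < m := lt_of_lt_of_le hlt hy.2
    have hd : 0 < a + b - 2*x := by rw [hm] at hxm; linarith
    set lam := (a + b - x - y)/(a + b - 2*x) with hlam
    set mu := (y - x)/(a + b - 2*x) with hmu
    have hym : y ≤ m := hy.2
    have hlam0 : 0 ≤ lam := by
      apply div_nonneg _ hd.le
      rw [hm] at hxm hym; linarith
    have hmu0 : 0 ≤ mu := by
      apply div_nonneg _ hd.le; linarith
    have hsum : lam + mu = 1 := by
      rw [hlam, hmu, ← add_div, div_eq_one_iff_eq hd.ne']; ring
    have hxI : x ∈ I := hIcc ⟨hx.1, le_trans hx.2 hmab.2⟩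
    have hxI' : a + b - x ∈ I := hIcc (hmaps x ⟨hx.1, le_trans hx.2 hmab.2⟩)
    have e1 : lam * x + mu * (a + b - x) = y := by
      rw [hlam, hmu, div_mul_eq_mul_div, div_mul_eq_mul_div, ← add_div, div_eq_iff hd.ne']; ring
    have e2 : mu * x + lam * (a + b - x) = a + b - y := by
      rw [hlam, hmu, div_mul_eq_mul_div, div_mul_eq_mul_div, ← add_div, div_eq_iff hd.ne']; ring
    have c1 := hc.2 hxI hxI' hlam0 hmu0 hsum
    have c2 := hc.2 hxI hxI' hmu0 hlam0 (by linarith)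
    simp only [smul_eq_mul] at c1 c2
    rw [e1] at c1
    rw [e2] at c2
    have e3 : lam * f x + mu * f (a+b-x) + (mu * f x + lam * f (a+b-x))
        = (lam + mu) * (f x + f (a+b-x)) := by ring
    rw [hsum, one_mul] at e3
    show f y + f (a + b - y) ≤ f x + f (a + b - x)
    linarith
  -- integral identities
  have harg : ∀ x : ℝ, a + b - (a + b - x) = x := fun x => by ring
  have hGsym : ∀ x : ℝ, G (a + b - x) = G x := by
    intro x
    show f (a + b - x) + f (a + b - (a + b - x)) = f x + f (a + b - x)
    rw [harg]; exact add_comm _ _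
  have E1 : (∫ x in a..(a+ε), f (a + b - x)) = ∫ x in (b-ε)..b, f x := by
    rw [intervalIntegral.integral_comp_sub_left f (a+b)]
    congr 1 <;> ring
  have E2 : (∫ x in a..b, f (a + b - x)) = ∫ x in a..b, f x := by
    rw [intervalIntegral.integral_comp_sub_left f (a+b)]
    congr 1 <;> ring
  have E3 : (∫ x in a..m, G x) = ∫ x in m..b, G x := by
    calc (∫ x in a..m, G x) = ∫ x in a..m, G (a + b - x) := by
          apply integral_congr; intro x _; exact (hGsym x).symm
      _ = ∫ x in (a+b)-m..(a+b)-a, G x := intervalIntegral.integral_comp_sub_left G (a+b)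
      _ = ∫ x in m..b, G x := by congr 1 <;> (try rw [hm]) <;> ring
  have hmemaε : a + ε ∈ Icc a b := ⟨by linarith, le_trans haεm hmab.2⟩
  have hmema : a ∈ Icc a b := left_mem_Icc.mpr hab.le
  have hmemb : b ∈ Icc a b := right_mem_Icc.mpr hab.le
  have S1 : (∫ x in a..m, G x) + (∫ x in m..b, G x) = ∫ x in a..b, G x :=
    integral_add_adjacent_intervals (hGint a m hmema hmab) (hGint m b hmab hmemb)
  have S2 : (∫ x in a..(a+ε), G x) + (∫ x in (a+ε)..m, G x) = ∫ x in a..m, G x :=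
    integral_add_adjacent_intervals (hGint a (a+ε) hmema hmemaε)
      (hGint (a+ε) m hmemaε hmab)
  have hspl : ∀ u v : ℝ, u ∈ Icc a b → v ∈ Icc a b →
      (∫ x in u..v, G x) = (∫ x in u..v, f x) + ∫ x in u..v, f (a + b - x) := by
    intro u v hu hv
    exact integral_add (hfint u v hu hv) (hf2int u v hu hv)
  -- G integral over [a,b] equals twice f integral
  have hGab : (∫ x in a..b, G x) = 2 * ∫ x in a..b, f x := by
    rw [hspl a b hmema hmemb, E2]; ring
  have hfG : (∫ x in a..b, f x) = ∫ x in a..m, G x := by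
    have := S1
    rw [← E3] at this
    linarith [hGab]
  -- RHS in terms of G
  have hA : (∫ x in a..(a+ε), f x) + (∫ x in (b-ε)..b, f x) = ∫ x in a..(a+ε), G x := by
    rw [hspl a (a+ε) hmema hmemaε, E1]
  -- bounds
  have B1 : (∫ x in (a+ε)..m, G x) ≤ (m - (a+ε)) * G (a+ε) := by
    have h1 : (∫ x in (a+ε)..m, G x) ≤ ∫ _x in (a+ε)..m, G (a+ε) := by
      apply integral_mono_on haεm (hGint (a+ε) m hmemaε hmab) intervalIntegrable_const
      intro x hx
      exact key (a+ε) ⟨by linarith, haεm⟩ x ⟨by linarith [hx.1], hx.2⟩ hx.1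
    rw [intervalIntegral.integral_const, smul_eq_mul] at h1
    exact h1
  have B2 : ε * G (a+ε) ≤ ∫ x in a..(a+ε), G x := by
    have h1 : (∫ _x in a..(a+ε), G (a+ε)) ≤ ∫ x in a..(a+ε), G x := by
      apply integral_mono_on (by linarith) intervalIntegrable_const
        (hGint a (a+ε) hmema hmemaε)
      intro x hx
      exact key x ⟨hx.1, le_trans hx.2 haεm⟩ (a+ε) ⟨by linarith, haεm⟩ hx.2
    rw [intervalIntegral.integral_const, smul_eq_mul] at h1
    calc ε * G (a+ε) = (a + ε - a) * G (a+ε) := by ring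
      _ ≤ _ := h1
  -- final arithmetic
  set Im := ∫ x in a..m, G x
  set A := ∫ x in a..(a+ε), G x
  have hR : ε * Im ≤ (m - a) * A := by
    have hrem : Im - A ≤ (m - (a+ε)) * G (a+ε) := by rw [← S2]; linarith [B1]
    nlinarith [B2, hrem, hε.le, sub_nonneg.mpr haεm]
  have hba : b - a = 2 * (m - a) := by rw [hm]; ring
  have hma : 0 < m - a := by rw [hm]; linarith
  rw [hfG]
  have hRHS : (1 / (2 * ε)) * (∫ x in a..(a+ε), f x) + (1 / (2 * ε)) * (∫ x in (b-ε)..b, f x)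
      = (1 / (2 * ε)) * A := by rw [← hA]; ring
  rw [hRHS, hba]
  rw [div_mul_eq_mul_div, div_mul_eq_mul_div, div_le_div_iff₀ (by linarith) (by linarith)]
  nlinarith [hR]


theorem stmt8 (I : Set ℝ) (hI : I.OrdConnected) (f : ℝ → ℝ)
    (hf : ContinuousOn f I) :
    ConvexOn ℝ I f ↔
      ∀ a b : ℝ, a ∈ I → b ∈ I → a < b → ∀ ε : ℝ, 0 < ε → ε < (b - a) / 2 →
        (1 / (b - a)) * ∫ x in a..b, f x ≤
          (1 / (2 * ε)) * (∫ x in a..(a + ε), f x) +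
            (1 / (2 * ε)) * ∫ x in (b - ε)..b, f x := by
  constructor
  · intro hc a b ha hb hab ε hε hε2
    exact my_fwd hI hf hc ha hb hab hε hε2
  · intro H
    exact my_conv hI hf H
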